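/- Let (R,\mathfrak{m}) be a complete Noetherian local domain, B a balanced big Cohen-Macaulay R^+-algebra, and \mathfrak{a}, \mathfrak{b}, I, J ideals of R. Then: (1) \mathfrak{a} \subseteq \mathfrak{b} implies c_B^J(\mathfrak{a}) \leq c_B^J(\mathfrak{b}); (2) J \subseteq I implies c_B^I(\mathfrak{a}) \leq c_B^J(\mathfrak{a}); (3) c_B^J(\mathfrak{a}) = c_B^J(\overline{\mathfrak{a}}); and (4) c_B^J(\mathfrak{a}^n) = (1/n)\,c_B^J(\mathfrak{a}) for every integer n \geq 1. -/

import Mathlib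

set_option synthInstance.maxHeartbeats 1000000
set_option maxHeartbeats 1000000
open scoped NNReal

/-- Integral closure of an ideal: elements satisfying an equation of integral dependence. -/
def idealIntClosure {R : Type} [CommRing R] (I : Ideal R) : Set R :=
  {x | ∃ n : ℕ, 0 < n ∧ ∃ c : ℕ → R, (∀ i, 1 ≤ i → i ≤ n → c i ∈ I ^ i) ∧
    x ^ n + ∑ i ∈ Finset.Icc 1 n, c i * x ^ (n - i) = 0}

/-- A fixed algebraic closure of the fraction field of `R`. -/
abbrev Kbar (R : Type) [CommRing R] [IsDomain R] : Type :=
  AlgebraicClosure (FractionRing R)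

/-- The absolute integral closure `R⁺` of `R`. -/
noncomputable def Rplus (R : Type) [CommRing R] [IsDomain R] : Subalgebra R (Kbar R) :=
  integralClosure R (Kbar R)

/-- The extension of the ideal `I ⊆ R` to the subalgebra `A` of `Kbar R`, as a set. -/
def extIdeal (R : Type) [CommRing R] [IsDomain R] (A : Subalgebra R (Kbar R))
    (I : Ideal R) : Set (Kbar R) :=
  (Submodule.span (↥A) ((algebraMap R (Kbar R)) '' (I : Set R)) : Set (Kbar R))

/-- The valuatively defined fractional power `J_t` (relative to the subalgebra `A`):
elements `x` of `A` such that for every (rank-one, real-valued, multiplicatively written)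
valuation `v` of `Kbar R` nonnegative on `A` (i.e. `v ≤ 1` on `A`), there is `y ∈ J` with
`v x ≤ (v y) ^ t` (additively: `v_add x ≥ t · v_add y`). -/
def valFracGE (R : Type) [CommRing R] [IsDomain R] (A : Subalgebra R (Kbar R))
    (J : Set (Kbar R)) (t : ℝ) : Set (Kbar R) :=
  {x | x ∈ A ∧ ∀ v : Valuation (Kbar R) ℝ≥0,
    (∀ a ∈ (A : Set (Kbar R)), v a ≤ 1) → ∃ y ∈ J, v x ≤ (v y) ^ t}

/-- The strict valuatively defined fractional power `J_{>t}`. -/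
def valFracGT (R : Type) [CommRing R] [IsDomain R] (A : Subalgebra R (Kbar R))
    (J : Set (Kbar R)) (t : ℝ) : Set (Kbar R) :=
  {x | x ∈ A ∧ ∀ v : Valuation (Kbar R) ℝ≥0,
    (∀ a ∈ (A : Set (Kbar R)), v a ≤ 1) → ∃ y ∈ J, v x < (v y) ^ t}

/-- `x` is a regular sequence on `B`: each `x i` is a nonzerodivisor modulo the previous ones. -/
def IsRegSeq {B : Type} [CommRing B] {n : ℕ} (x : Fin n → B) : Prop :=
  ∀ i : Fin n, ∀ b : B,
    x i * b ∈ Ideal.span {y | ∃ j : Fin n, j < i ∧ y = x j} →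
    b ∈ Ideal.span {y | ∃ j : Fin n, j < i ∧ y = x j}

/-- `B` is a balanced big Cohen-Macaulay algebra over the Noetherian local ring `T`:
`𝔪_T B ≠ B` and every system of parameters of `T` is a regular sequence on `B`. -/
def IsBalancedBigCM (T : Type) [CommRing T] [IsLocalRing T]
    (B : Type) [CommRing B] [Algebra T B] : Prop :=
  (IsLocalRing.maximalIdeal T).map (algebraMap T B) ≠ ⊤ ∧
  ∀ (n : ℕ) (x : Fin n → T), (n : WithBot ℕ∞) = ringKrullDim T →
    (Ideal.span (Set.range x)).radical = IsLocalRing.maximalIdeal T →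
    IsRegSeq (fun i => algebraMap T B (x i))

/-- `(𝔞 R⁺)_{>t} ⊆ J B`. -/
def subGT (R : Type) [CommRing R] [IsDomain R] (B : Type) [CommRing B] [Algebra R B]
    [Algebra (↥(Rplus R)) B] (𝔞 J : Ideal R) (t : ℝ) : Prop :=
  ∀ x : ↥(Rplus R), (x : Kbar R) ∈ valFracGT R (Rplus R) (extIdeal R (Rplus R) 𝔞) t →
    algebraMap (↥(Rplus R)) B x ∈ J.map (algebraMap R B)

/-- The BCM-threshold `c_B^J(𝔞) = sup { t ∈ ℝ : (𝔞 R⁺)_{>t} ⊄ J B }`, as an extended real. -/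
noncomputable def cBCM (R : Type) [CommRing R] [IsDomain R] (B : Type) [CommRing B]
    [Algebra R B] [Algebra (↥(Rplus R)) B] (𝔞 J : Ideal R) : EReal :=
  sSup {t : EReal | ∃ s : ℝ, t = (s : EReal) ∧ ¬ subGT R B 𝔞 J s}

/-- `B` satisfies the Briançon-Skoda property: for each ideal `J` of `R` generated by `l`
elements and each finite extension `R ⊆ S ⊆ R⁺`,
`closure(J^{m+l-1} S) ⊆ J^m B` for every `m > 0`. -/
def BrianconSkoda (R : Type) [CommRing R] [IsDomain R] (B : Type) [CommRing B] [Algebra R B]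
    [Algebra (↥(Rplus R)) B] : Prop :=
  ∀ (l : ℕ) (f : Fin l → R) (m : ℕ), 0 < m →
    ∀ (S : Subalgebra R (Kbar R)) (hS : S ≤ Rplus R), Module.Finite R ↥S →
      ∀ x : ↥S,
        x ∈ idealIntClosure
          ((Ideal.map (algebraMap R ↥S) (Ideal.span (Set.range f))) ^ (m + l - 1)) →
        algebraMap (↥(Rplus R)) B (Subalgebra.inclusion hS x) ∈
          ((Ideal.span (Set.range f)) ^ m).map (algebraMap R B)

section MyAux
variable {R : Type} [CommRing R] [IsDomain R]

lemma my_extIdeal_mono (A : Subalgebra R (Kbar R)) {I I' : Ideal R} (h : I ≤ I') :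
    extIdeal R A I ⊆ extIdeal R A I' :=
  Submodule.span_mono (Set.image_mono h)

lemma my_extIdeal_subset (A : Subalgebra R (Kbar R)) (I : Ideal R) :
    extIdeal R A I ⊆ (A : Set (Kbar R)) := by
  intro y hy
  refine Submodule.span_induction (p := fun y _ => y ∈ (A : Set (Kbar R))) ?_ ?_ ?_ ?_ hy
  · rintro _ ⟨w, _, rfl⟩; exact A.algebraMap_mem w
  · exact A.zero_mem
  · exact fun a b _ _ ha hb => A.add_mem ha hb
  · exact fun u x _ hx => A.mul_mem u.2 hx

lemma my_mul_mem_extIdeal (A : Subalgebra R (Kbar R)) {I : Ideal R} {y z : Kbar R}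
    (hy : y ∈ (A : Set (Kbar R))) (hz : z ∈ extIdeal R A I) : y * z ∈ extIdeal R A I :=
  Submodule.smul_mem (Submodule.span (↥A) ((algebraMap R (Kbar R)) '' (I : Set R))) ⟨y, hy⟩ hz

lemma my_extIdeal_mul (A : Subalgebra R (Kbar R)) (I I' : Ideal R) {y z : Kbar R}
    (hy : y ∈ extIdeal R A I) (hz : z ∈ extIdeal R A I') : y * z ∈ extIdeal R A (I * I') := by
  have h : Submodule.span (↥A) ((algebraMap R (Kbar R)) '' (I : Set R)) *
      Submodule.span (↥A) ((algebraMap R (Kbar R)) '' (I' : Set R)) ≤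
      Submodule.span (↥A) ((algebraMap R (Kbar R)) '' ((I * I' : Ideal R) : Set R)) := by
    rw [Submodule.span_mul_span]
    refine Submodule.span_le.2 ?_
    rintro w hw
    rw [Set.mem_mul] at hw
    obtain ⟨u, hu, w', hw', rfl⟩ := hw
    obtain ⟨a, ha, rfl⟩ := hu
    obtain ⟨b, hb, rfl⟩ := hw'
    exact Submodule.subset_span ⟨a * b, Ideal.mul_mem_mul ha hb, map_mul _ a b⟩
  exact h (Submodule.mul_mem_mul hy hz)

lemma my_extIdeal_pow (A : Subalgebra R (Kbar R)) (I : Ideal R) {y : Kbar R}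
    (hy : y ∈ extIdeal R A I) : ∀ n : ℕ, 1 ≤ n → y ^ n ∈ extIdeal R A (I ^ n) := by
  intro n
  induction n with
  | zero => omega
  | succ k ih =>
    intro _
    rcases Nat.eq_zero_or_pos k with hk | hk
    · subst hk; simpa [pow_one] using hy
    · rw [pow_succ, pow_succ]
      exact my_extIdeal_mul A _ _ (ih hk) hy

variable {v : Valuation (Kbar R) ℝ≥0}

lemma my_val_span_le (hv1 : ∀ r : R, v (algebraMap R (Kbar R) r) ≤ 1) (s : Set R) (C : ℝ≥0)
    (hC : ∀ a ∈ s, v (algebraMap R (Kbar R) a) ≤ C) :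
    ∀ w ∈ Ideal.span s, v (algebraMap R (Kbar R) w) ≤ C := by
  intro w hw
  refine Submodule.span_induction (p := fun w _ => v (algebraMap R (Kbar R) w) ≤ C) ?_ ?_ ?_ ?_ hw
  · exact hC
  · simp
  · intro a b _ _ ha hb; rw [map_add]; exact le_trans (v.map_add _ _) (max_le ha hb)
  · intro r w _ hw'
    rw [smul_eq_mul, map_mul, map_mul]
    exact le_trans (mul_le_mul' (hv1 r) hw') (by rw [one_mul])

lemma my_val_pow_le (hv1 : ∀ r : R, v (algebraMap R (Kbar R) r) ≤ 1) (I : Ideal R) (M : ℝ≥0)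
    (hM : ∀ a ∈ I, v (algebraMap R (Kbar R) a) ≤ M) :
    ∀ i : ℕ, ∀ w ∈ I ^ i, v (algebraMap R (Kbar R) w) ≤ M ^ i := by
  intro i
  induction i with
  | zero => intro w _; simpa using hv1 w
  | succ k ih =>
    intro w hw
    rw [pow_succ] at hw
    refine Submodule.mul_induction_on hw ?_ ?_
    · intro m hm b hb
      rw [map_mul, map_mul, pow_succ]
      exact mul_le_mul' (ih m hm) (hM b hb)
    · intro a b ha hb
      rw [map_add]; exact le_trans (v.map_add _ _) (max_le ha hb)

lemma my_val_intClosure_le (hv1 : ∀ r : R, v (algebraMap R (Kbar R) r) ≤ 1) (I : Ideal R)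
    (M : ℝ≥0) (hM : ∀ a ∈ I, v (algebraMap R (Kbar R) a) ≤ M) :
    ∀ z ∈ idealIntClosure I, v (algebraMap R (Kbar R) z) ≤ M := by
  intro z hz
  by_contra hlt
  push_neg at hlt
  obtain ⟨n, hn, c, hc, heq⟩ := hz
  set W := v (algebraMap R (Kbar R) z) with hW
  have hW0 : 0 < W := lt_of_le_of_lt (zero_le (a := M)) hlt
  have hzn : (z : R) ^ n = -(∑ i ∈ Finset.Icc 1 n, c i * z ^ (n - i)) := by
    linear_combination heq
  have h2 : v (algebraMap R (Kbar R) (∑ i ∈ Finset.Icc 1 n, c i * z ^ (n - i))) < W ^ n := by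
    rw [map_sum]
    refine Valuation.map_sum_lt v (pow_pos hW0 n).ne' ?_
    intro i hi
    rw [Finset.mem_Icc] at hi
    rw [map_mul, map_pow]
    rw [map_mul, map_pow]
    calc v (algebraMap R (Kbar R) (c i)) * W ^ (n - i)
        ≤ M ^ i * W ^ (n - i) :=
          mul_le_mul' (my_val_pow_le hv1 I M hM i (c i) (hc i hi.1 hi.2)) le_rfl
      _ < W ^ i * W ^ (n - i) :=
          mul_lt_mul_of_pos_right (pow_lt_pow_left₀ hlt (zero_le (a := M)) (by omega)) (pow_pos hW0 _)
      _ = W ^ n := by rw [← pow_add]; congr 1; omega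
  have hcon : W ^ n < W ^ n := by
    calc W ^ n = v (algebraMap R (Kbar R) (z ^ n)) := by rw [map_pow, map_pow]
      _ = v (algebraMap R (Kbar R) (∑ i ∈ Finset.Icc 1 n, c i * z ^ (n - i))) := by
          rw [hzn, map_neg, Valuation.map_neg]
      _ < W ^ n := h2
  exact lt_irrefl _ hcon

lemma my_val_ext_le {A : Subalgebra R (Kbar R)} (hv : ∀ a ∈ (A : Set (Kbar R)), v a ≤ 1)
    {I : Ideal R} {C : ℝ≥0} (hC : ∀ w ∈ I, v (algebraMap R (Kbar R) w) ≤ C) :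
    ∀ y ∈ extIdeal R A I, v y ≤ C := by
  intro y hy
  have hy' : y ∈ Submodule.span (↥A) ((algebraMap R (Kbar R)) '' (I : Set R)) := hy
  clear hy
  induction hy' using Submodule.span_induction with
  | mem w hw =>
    obtain ⟨w', hw', rfl⟩ := hw
    exact hC w' hw'
  | zero => simp
  | add a b _ _ ha hb => exact le_trans (v.map_add a b) (max_le ha hb)
  | smul u x _ hx =>
    have h1 : (u : Kbar R) * x = u • x := rfl
    rw [← h1, map_mul]
    exact le_trans (mul_le_mul' (hv _ u.2) hx) (by rw [one_mul])

lemma my_exists_max [IsNoetherianRing R] (I : Ideal R) (v : Valuation (Kbar R) ℝ≥0)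
    (hv1 : ∀ r : R, v (algebraMap R (Kbar R) r) ≤ 1) :
    ∃ M : ℝ≥0, ∃ a ∈ I, v (algebraMap R (Kbar R) a) = M ∧
      ∀ w ∈ I, v (algebraMap R (Kbar R) w) ≤ M := by
  obtain ⟨s, hs⟩ := (IsNoetherian.noetherian I : I.FG)
  set M := s.sup (fun a => v (algebraMap R (Kbar R) a)) with hMdef
  have hbound : ∀ w ∈ I, v (algebraMap R (Kbar R) w) ≤ M := by
    intro w hw
    rw [← hs] at hw
    refine my_val_span_le hv1 _ M ?_ w hw
    intro a ha
    exact Finset.le_sup (f := fun a => v (algebraMap R (Kbar R) a)) ha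
  rcases s.eq_empty_or_nonempty with he | hne
  · refine ⟨M, 0, I.zero_mem, ?_, hbound⟩
    rw [hMdef, he]
    simp
  · obtain ⟨a, ha, hae⟩ := s.exists_mem_eq_sup hne (fun a => v (algebraMap R (Kbar R) a))
    refine ⟨M, a, ?_, hae.symm, hbound⟩
    rw [← hs]
    exact Ideal.subset_span ha

lemma my_valFracGT_mono {A : Subalgebra R (Kbar R)} {J J' : Set (Kbar R)} (h : J ⊆ J') (t : ℝ) :
    valFracGT R A J t ⊆ valFracGT R A J' t := fun x hx =>
  ⟨hx.1, fun v hv => by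
    obtain ⟨y, hy, hlt⟩ := hx.2 v hv
    exact ⟨y, h hy, hlt⟩⟩

lemma my_mem_intClosure_self {I : Ideal R} {a : R} (ha : a ∈ I) : a ∈ idealIntClosure I := by
  refine ⟨1, one_pos, fun _ => -a, ?_, ?_⟩
  · intro i h1 h2
    have : i = 1 := le_antisymm h2 h1
    subst this
    simpa [pow_one] using I.neg_mem ha
  · simp

lemma my_key3 [IsNoetherianRing R] (𝔞 : Ideal R) (t : ℝ) :
    valFracGT R (Rplus R) (extIdeal R (Rplus R) (Ideal.span (idealIntClosure 𝔞))) t =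
    valFracGT R (Rplus R) (extIdeal R (Rplus R) 𝔞) t := by
  apply Set.Subset.antisymm
  · rintro x ⟨hxA, hx⟩
    refine ⟨hxA, fun v hv => ?_⟩
    obtain ⟨y, hy, hlt⟩ := hx v hv
    have hv1 : ∀ r : R, v (algebraMap R (Kbar R) r) ≤ 1 :=
      fun r => hv _ ((Rplus R).algebraMap_mem r)
    obtain ⟨M, a, haI, haM, hbound⟩ := my_exists_max 𝔞 v hv1
    have hicl : ∀ w ∈ Ideal.span (idealIntClosure 𝔞), v (algebraMap R (Kbar R) w) ≤ M :=
      my_val_span_le hv1 _ M (my_val_intClosure_le hv1 𝔞 M hbound)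
    have hyM : v y ≤ M := my_val_ext_le hv hicl y hy
    have haext : algebraMap R (Kbar R) a ∈ extIdeal R (Rplus R) 𝔞 :=
      Submodule.subset_span ⟨a, haI, rfl⟩
    rcases le_or_gt 0 t with ht | ht
    · refine ⟨algebraMap R (Kbar R) a, haext, ?_⟩
      rw [haM]
      exact lt_of_lt_of_le hlt (NNReal.rpow_le_rpow hyM ht)
    · have hy0 : 0 < v y := by
        rcases (zero_le (a := v y)).lt_or_eq with h0 | h0
        · exact h0
        · rw [← h0, NNReal.zero_rpow ht.ne] at hlt
          exact absurd hlt (by simp)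
      have hM0 : 0 < M := lt_of_lt_of_le hy0 hyM
      refine ⟨y * algebraMap R (Kbar R) a,
        my_mul_mem_extIdeal (Rplus R) (my_extIdeal_subset (Rplus R) _ hy) haext, ?_⟩
      calc v x < (v y) ^ t := hlt
        _ ≤ (v (y * algebraMap R (Kbar R) a)) ^ t := by
            rw [map_mul]
            refine NNReal.rpow_le_rpow_of_nonpos ?_ ?_ ht.le
            · exact mul_pos hy0 (haM ▸ hM0)
            · exact le_trans (mul_le_mul' le_rfl (hv1 a)) (by rw [mul_one])
  · refine my_valFracGT_mono (my_extIdeal_mono (Rplus R) ?_) t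
    intro a ha
    exact Ideal.subset_span (my_mem_intClosure_self ha)

lemma my_key4 [IsNoetherianRing R] (𝔞 : Ideal R) (n : ℕ) (hn : 1 ≤ n) (t : ℝ) :
    valFracGT R (Rplus R) (extIdeal R (Rplus R) (𝔞 ^ n)) t =
    valFracGT R (Rplus R) (extIdeal R (Rplus R) 𝔞) ((n : ℝ) * t) := by
  apply Set.Subset.antisymm
  · rintro x ⟨hxA, hx⟩
    refine ⟨hxA, fun v hv => ?_⟩
    obtain ⟨y, hy, hlt⟩ := hx v hv
    have hv1 : ∀ r : R, v (algebraMap R (Kbar R) r) ≤ 1 :=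
      fun r => hv _ ((Rplus R).algebraMap_mem r)
    rcases le_or_gt 0 t with ht | ht
    · obtain ⟨M, a, haI, haM, hbound⟩ := my_exists_max 𝔞 v hv1
      have hyM : v y ≤ M ^ n := my_val_ext_le hv (my_val_pow_le hv1 𝔞 M hbound n) y hy
      refine ⟨algebraMap R (Kbar R) a, Submodule.subset_span ⟨a, haI, rfl⟩, ?_⟩
      calc v x < (v y) ^ t := hlt
        _ ≤ ((M ^ n : ℝ≥0)) ^ t := NNReal.rpow_le_rpow hyM ht
        _ = (v (algebraMap R (Kbar R) a)) ^ ((n : ℝ) * t) := by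
            rw [haM, ← NNReal.rpow_natCast M n, ← NNReal.rpow_mul]
    · have hy0 : 0 < v y := by
        rcases (zero_le (a := v y)).lt_or_eq with h0 | h0
        · exact h0
        · rw [← h0, NNReal.zero_rpow ht.ne] at hlt
          exact absurd hlt (by simp)
      have hyA : y ∈ ((Rplus R : Subalgebra R (Kbar R)) : Set (Kbar R)) :=
        my_extIdeal_subset (Rplus R) _ hy
      refine ⟨y, my_extIdeal_mono (Rplus R) (Ideal.pow_le_self (by omega)) hy, ?_⟩
      calc v x < (v y) ^ t := hlt
        _ ≤ (v y) ^ ((n : ℝ) * t) := by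
            refine NNReal.rpow_le_rpow_of_exponent_ge hy0 (hv y hyA) ?_
            have h1 : (1 : ℝ) ≤ (n : ℝ) := by exact_mod_cast hn
            nlinarith
  · rintro x ⟨hxA, hx⟩
    refine ⟨hxA, fun v hv => ?_⟩
    obtain ⟨y, hy, hlt⟩ := hx v hv
    refine ⟨y ^ n, my_extIdeal_pow (Rplus R) 𝔞 hy n hn, ?_⟩
    rw [map_pow, ← NNReal.rpow_natCast (v y) n, ← NNReal.rpow_mul]
    exact hlt

end MyAux

noncomputable def myERealMulIso (c : ℝ) (hc : 0 < c) : EReal ≃o EReal where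
  toFun x := x * (c : EReal)
  invFun x := x * ((c⁻¹ : ℝ) : EReal)
  left_inv x := by
    show x * (c : EReal) * ((c⁻¹ : ℝ) : EReal) = x
    rw [mul_assoc, ← EReal.coe_mul, mul_inv_cancel₀ hc.ne', EReal.coe_one, mul_one]
  right_inv x := by
    show x * ((c⁻¹ : ℝ) : EReal) * (c : EReal) = x
    rw [mul_assoc, ← EReal.coe_mul, inv_mul_cancel₀ hc.ne', EReal.coe_one, mul_one]
  map_rel_iff' := by
    intro a b
    simp only [Equiv.coe_fn_mk]
    constructor
    · intro h
      have h2 := mul_le_mul_of_nonneg_right h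
        (EReal.coe_nonneg.mpr (inv_nonneg.mpr hc.le) : (0:EReal) ≤ ((c⁻¹ : ℝ) : EReal))
      rwa [mul_assoc, mul_assoc, ← EReal.coe_mul, mul_inv_cancel₀ hc.ne', EReal.coe_one,
        mul_one, mul_one] at h2
    · intro h
      exact mul_le_mul_of_nonneg_right h (EReal.coe_nonneg.mpr hc.le)

lemma myERealSSup (c : ℝ) (hc : 0 < c) (S : Set EReal) :
    sSup ((fun x => x * (c : EReal)) '' S) = (sSup S) * (c : EReal) := by
  rw [sSup_image]
  exact ((myERealMulIso c hc).map_sSup S).symm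

/-- Basic properties of BCM-thresholds: monotonicity in `𝔞` and in `J`, invariance under
integral closure of `𝔞`, and the scaling `c_B^J(𝔞^n) = (1/n) c_B^J(𝔞)`. -/
theorem stmt17 (R : Type) [CommRing R] [IsDomain R] [IsNoetherianRing R] [IsLocalRing R]
    [IsAdicComplete (IsLocalRing.maximalIdeal R) R]
    (B : Type) [CommRing B] [Algebra R B] [Algebra (↥(Rplus R)) B]
    [IsScalarTower R (↥(Rplus R)) B]
    (hBCM : IsBalancedBigCM R B)
    (𝔞 𝔟 I J : Ideal R) (n : ℕ) (hn : 1 ≤ n) :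
    (𝔞 ≤ 𝔟 → cBCM R B 𝔞 J ≤ cBCM R B 𝔟 J) ∧
    (J ≤ I → cBCM R B 𝔞 I ≤ cBCM R B 𝔞 J) ∧
    (cBCM R B 𝔞 J = cBCM R B (Ideal.span (idealIntClosure 𝔞)) J) ∧
    (cBCM R B (𝔞 ^ n) J = (((n : ℝ)⁻¹ : ℝ) : EReal) * cBCM R B 𝔞 J) := by
  have hnr : ((n : ℝ)) ≠ 0 := Nat.cast_ne_zero.mpr (by omega)
  refine ⟨?_, ?_, ?_, ?_⟩
  · intro hab
    apply sSup_le_sSup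
    rintro t ⟨s, rfl, hs⟩
    refine ⟨s, rfl, fun hsub => hs ?_⟩
    intro x hx
    exact hsub x (my_valFracGT_mono (my_extIdeal_mono (Rplus R) hab) s hx)
  · intro hJI
    apply sSup_le_sSup
    rintro t ⟨s, rfl, hs⟩
    refine ⟨s, rfl, fun hsub => hs ?_⟩
    intro x hx
    exact Ideal.map_mono hJI (hsub x hx)
  · unfold cBCM
    congr 1
    ext t
    simp only [Set.mem_setOf_eq]
    refine exists_congr fun s => and_congr_right fun _ => not_congr ?_
    unfold subGT
    rw [my_key3 𝔞 s]
  · have h4 : ∀ s : ℝ, subGT R B (𝔞 ^ n) J s ↔ subGT R B 𝔞 J ((n : ℝ) * s) := by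
      intro s
      unfold subGT
      rw [my_key4 𝔞 n hn s]
    have hc : (0 : ℝ) < (n : ℝ)⁻¹ := by
      have : (0 : ℝ) < (n : ℝ) := by
        have := hn
        exact_mod_cast Nat.lt_of_lt_of_le Nat.zero_lt_one hn
      exact inv_pos.mpr this
    unfold cBCM
    have himg : {t : EReal | ∃ s : ℝ, t = (s : EReal) ∧ ¬ subGT R B (𝔞 ^ n) J s}
        = (fun x => x * (((n : ℝ)⁻¹ : ℝ) : EReal)) ''
          {t : EReal | ∃ s : ℝ, t = (s : EReal) ∧ ¬ subGT R B 𝔞 J s} := by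
      ext t
      constructor
      · rintro ⟨s, rfl, hs⟩
        refine ⟨(((n : ℝ) * s : ℝ) : EReal), ⟨(n : ℝ) * s, rfl, fun hh => hs ((h4 s).mpr hh)⟩, ?_⟩
        show ((((n : ℝ) * s : ℝ)) : EReal) * (((n : ℝ)⁻¹ : ℝ) : EReal) = (s : EReal)
        rw [← EReal.coe_mul]
        congr 1
        field_simp
      · rintro ⟨t', ⟨u, rfl, hu⟩, rfl⟩
        refine ⟨u * (n : ℝ)⁻¹, ?_, fun hh => hu ?_⟩
        · show ((u : ℝ) : EReal) * (((n : ℝ)⁻¹ : ℝ) : EReal) = ((u * (n : ℝ)⁻¹ : ℝ) : EReal)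
          rw [← EReal.coe_mul]
        have h5 := (h4 (u * (n : ℝ)⁻¹)).mp hh
        rwa [show (n : ℝ) * (u * (n : ℝ)⁻¹) = u by field_simp] at h5
    rw [himg, myERealSSup _ hc, mul_comm]
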